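/- For a monomial ideal I in k[x_1,...,x_n], a monomial x^A (with exponent vector A ∈ ℤ_{≥0}^n) lies in the integral closure Ī of I if and only if A belongs to the convex hull (in ℝ^n) of the exponent set of I, i.e., there exist exponent vectors A_1,...,A_r of monomials in I and nonnegative rationals λ_1,...,λ_r summing to 1 with Σ λ_i A_i ≤ A componentwise. -/

import Mathlib

open MvPolynomial

variable {k : Type} [Field k] {n : ℕ}

/-- An ideal of `k[x₁,…,xₙ]` is a *monomial ideal* if it is generated by monomials. -/
def IsMonomialIdeal (I : Ideal (MvPolynomial (Fin n) k)) : Prop :=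
  ∃ G : Set (Fin n →₀ ℕ), I = Ideal.span ((fun A => (monomial A (1 : k))) '' G)

/-- The integral closure of an ideal `I`, as a set: all elements `f` satisfying an
equation `f^r + a₁ f^{r-1} + ⋯ + a_r = 0` with `aᵢ ∈ Iⁱ`. -/
def intCl (I : Ideal (MvPolynomial (Fin n) k)) : Set (MvPolynomial (Fin n) k) :=
  {f | ∃ r : ℕ, 0 < r ∧ ∃ a : ℕ → MvPolynomial (Fin n) k,
    (∀ i, 1 ≤ i → i ≤ r → a i ∈ I ^ i) ∧
    f ^ r + ∑ i ∈ Finset.Icc 1 r, a i * f ^ (r - i) = 0}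

/-- The exponent vectors of the minimal monomial generators of a set `T` of polynomials:
those `A` with `x^A ∈ T` minimal in the componentwise (divisibility) order. -/
def minExps (T : Set (MvPolynomial (Fin n) k)) : Set (Fin n →₀ ℕ) :=
  {A | monomial A (1 : k) ∈ T ∧
    ∀ B : Fin n →₀ ℕ, monomial B (1 : k) ∈ T → B ≤ A → B = A}

def sumSet (G : Set (Fin n →₀ ℕ)) : ℕ → Set (Fin n →₀ ℕ)
  | 0 => {0}
  | i+1 => {s | ∃ t ∈ sumSet G i, ∃ g ∈ G, s = t + g}

lemma mem_sumSet {G : Set (Fin n →₀ ℕ)} {i : ℕ} {s : Fin n →₀ ℕ} (hs : s ∈ sumSet G i) :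
    ∃ B : Fin i → (Fin n →₀ ℕ), (∀ j, B j ∈ G) ∧ ∑ j, B j = s := by
  induction i generalizing s with
  | zero =>
    refine ⟨Fin.elim0, fun j => j.elim0, ?_⟩
    simpa [sumSet] using hs.symm
  | succ i ih =>
    obtain ⟨t, ht, g, hg, rfl⟩ := hs
    obtain ⟨B, hB, hBs⟩ := ih ht
    refine ⟨Fin.snoc B g, ?_, ?_⟩
    · intro j
      refine Fin.lastCases ?_ ?_ j
      · simp [hg]
      · intro j; simp [hB j]
    · rw [Fin.sum_univ_castSucc]
      simp [Fin.snoc_castSucc, hBs]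

lemma span_pow (G : Set (Fin n →₀ ℕ)) (i : ℕ) :
    (Ideal.span ((fun A => monomial A (1:k)) '' G)) ^ i
      = Ideal.span ((fun A => monomial A (1:k)) '' sumSet G i) := by
  induction i with
  | zero =>
    simp only [pow_zero, sumSet, Set.image_singleton, monomial_zero', C_1]
    rw [Ideal.span_singleton_one, Ideal.one_eq_top]
  | succ i ih =>
    rw [pow_succ, ih, Ideal.span_mul_span']
    congr 1
    ext p
    constructor
    · rintro ⟨x, ⟨a, ha, rfl⟩, y, ⟨b, hb, rfl⟩, rfl⟩
      exact ⟨a + b, ⟨a, ha, b, hb, rfl⟩, by simp [monomial_mul]⟩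
    · rintro ⟨c, ⟨t, ht, g, hg, rfl⟩, rfl⟩
      exact ⟨monomial t 1, ⟨t, ht, rfl⟩, monomial g 1, ⟨g, hg, rfl⟩, by simp [monomial_mul]⟩

lemma prod_pow_mem (I : Ideal (MvPolynomial (Fin n) k)) {ι : Type} (s : Finset ι)
    (f : ι → MvPolynomial (Fin n) k) (m : ι → ℕ) (hf : ∀ i ∈ s, f i ∈ I) :
    (∏ i ∈ s, f i ^ m i) ∈ I ^ (∑ i ∈ s, m i) := by
  classical
  induction s using Finset.induction with
  | empty => simp [Ideal.one_eq_top]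
  | insert _ _ hx ih =>
    rename_i a s
    rw [Finset.prod_insert hx, Finset.sum_insert hx, pow_add]
    exact Ideal.mul_mem_mul (Ideal.pow_mem_pow (hf a (Finset.mem_insert_self a s)) _)
      (ih fun i hi => hf i (Finset.mem_insert_of_mem hi))

lemma prod_monomial_pow {ι : Type} (s : Finset ι) (B : ι → (Fin n →₀ ℕ)) (m : ι → ℕ) :
    (∏ i ∈ s, (monomial (B i) (1:k)) ^ m i) = monomial (∑ i ∈ s, m i • B i) 1 := by
  classical
  induction s using Finset.induction with
  | empty => simp
  | insert _ _ hx ih =>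
    rename_i a s
    rw [Finset.prod_insert hx, Finset.sum_insert hx, ih, monomial_pow, monomial_mul]
    simp

/-- For a monomial ideal `I`, a monomial `x^A` lies in the integral closure
of `I` iff `A` lies in the convex hull of the exponent set of `I`, i.e. there are exponent
vectors `As i` of monomials of `I` and nonnegative rationals `lam i` summing to `1` with
`∑ lam i • As i ≼ A` componentwise. -/
theorem monomial_mem_intCl_iff_convex (I : Ideal (MvPolynomial (Fin n) k))
    (hI : IsMonomialIdeal I) (A : Fin n →₀ ℕ) :
    monomial A (1 : k) ∈ intCl I ↔
      ∃ r : ℕ, 0 < r ∧ ∃ As : Fin r → (Fin n →₀ ℕ), ∃ lam : Fin r → ℚ,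
        (∀ i, monomial (As i) (1 : k) ∈ I) ∧ (∀ i, 0 ≤ lam i) ∧ (∑ i, lam i = 1) ∧
        ∀ j : Fin n, (∑ i, lam i * ((As i) j : ℚ)) ≤ (A j : ℚ) := by
  obtain ⟨G, rfl⟩ := hI
  constructor
  · rintro ⟨r, hr, a, ha, heq⟩
    -- take coefficient of r•A
    have hco := congrArg (coeff (r • A)) heq
    rw [coeff_add, coeff_zero, coeff_sum, monomial_pow, one_pow, coeff_monomial,
      if_pos rfl] at hco
    have hne : ∑ i ∈ Finset.Icc 1 r, coeff (r • A) (a i * (monomial A (1:k)) ^ (r - i)) ≠ 0 := by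
      intro h; rw [h] at hco; simpa using hco
    obtain ⟨i, hiIcc, hi⟩ := Finset.exists_ne_zero_of_sum_ne_zero hne
    rw [Finset.mem_Icc] at hiIcc
    have hle : (r - i) • A ≤ r • A := by
      intro j
      simp only [Finsupp.smul_apply, smul_eq_mul]
      exact Nat.mul_le_mul_right _ (Nat.sub_le r i)
    have hsub : r • A - (r - i) • A = i • A := by
      ext j
      simp only [Finsupp.tsub_apply, Finsupp.smul_apply, smul_eq_mul]
      rw [← Nat.sub_mul]
      congr 1
      omega
    rw [monomial_pow, one_pow, coeff_mul_monomial', if_pos hle, mul_one, hsub] at hi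
    have hmem : a i ∈ Ideal.span ((fun A => monomial A (1:k)) '' sumSet G i) := by
      rw [← span_pow]; exact ha i hiIcc.1 hiIcc.2
    obtain ⟨s, hsS, hsle⟩ := mem_ideal_span_monomial_image.mp hmem (i • A)
      (mem_support_iff.mpr hi)
    obtain ⟨B, hB, hBs⟩ := mem_sumSet hsS
    have hipos : 0 < i := hiIcc.1
    refine ⟨i, hipos, B, fun _ => (i : ℚ)⁻¹, ?_, ?_, ?_, ?_⟩
    · exact fun j => Ideal.subset_span ⟨B j, hB j, rfl⟩
    · intro j; positivity
    · rw [Finset.sum_const, Finset.card_univ, Fintype.card_fin, nsmul_eq_mul,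
        mul_inv_cancel₀ (by exact_mod_cast hipos.ne')]
    · intro jc
      have hnat : ∑ j, (B j) jc ≤ i * A jc := by
        have := hsle jc
        rw [← hBs] at this
        simpa [Finsupp.finset_sum_apply] using this
      have hq : (∑ j, ((B j) jc : ℚ)) ≤ (i : ℚ) * A jc := by exact_mod_cast hnat
      calc ∑ j, (i : ℚ)⁻¹ * ((B j) jc : ℚ) = (i : ℚ)⁻¹ * ∑ j, ((B j) jc : ℚ) := by
            rw [Finset.mul_sum]
        _ ≤ (i : ℚ)⁻¹ * ((i : ℚ) * A jc) := by
            apply mul_le_mul_of_nonneg_left hq (by positivity)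
        _ = A jc := by
            rw [← mul_assoc, inv_mul_cancel₀ (by exact_mod_cast hipos.ne' : (i:ℚ) ≠ 0), one_mul]
  · rintro ⟨r, hr, As, lam, hAs, hlam0, hlam1, hle⟩
    set I := Ideal.span ((fun A => monomial A (1:k)) '' G) with hIdef
    set q : ℕ := ∏ i, (lam i).den with hqdef
    have hq : 0 < q := Finset.prod_pos fun i _ => (lam i).pos
    have hm : ∀ i : Fin r, ∃ mi : ℕ, (mi : ℚ) = lam i * q := by
      intro i
      obtain ⟨c, hc⟩ := Finset.dvd_prod_of_mem (fun i => (lam i).den) (Finset.mem_univ i)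
      refine ⟨(lam i).num.toNat * c, ?_⟩
      have h0 : 0 ≤ (lam i).num := Rat.num_nonneg.mpr (hlam0 i)
      have hden : ((lam i).den : ℚ) ≠ 0 := by exact_mod_cast (lam i).pos.ne'
      have hnum : lam i * (lam i).den = ((lam i).num : ℚ) := by
        have h := Rat.num_div_den (lam i)
        exact ((div_eq_iff hden).mp h).symm
      have htn : (((lam i).num.toNat : ℕ) : ℚ) = ((lam i).num : ℚ) := by
        exact_mod_cast Int.toNat_of_nonneg h0
      push_cast
      rw [htn, hqdef, hc]
      push_cast
      rw [← mul_assoc, hnum]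
    choose m hmEq using hm
    have hsum : ∑ i, m i = q := by
      have : ((∑ i, m i : ℕ) : ℚ) = ((q : ℕ) : ℚ) := by
        push_cast
        rw [Finset.sum_congr rfl fun i _ => hmEq i, ← Finset.sum_mul, hlam1, one_mul]
      exact_mod_cast this
    have hSle : (∑ i, m i • As i) ≤ q • A := by
      intro jc
      have hcast : ((∑ i, m i * (As i) jc : ℕ) : ℚ) ≤ ((q * A jc : ℕ) : ℚ) := by
        push_cast
        rw [Finset.sum_congr rfl fun i (_ : i ∈ Finset.univ) => by
          rw [hmEq i, mul_comm (lam i) (q:ℚ), mul_assoc]]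
        rw [← Finset.mul_sum]
        exact mul_le_mul_of_nonneg_left (hle jc) (by positivity)
      have : ∑ i, m i * (As i) jc ≤ q * A jc := by exact_mod_cast hcast
      simpa [Finsupp.finset_sum_apply] using this
    have hmem : monomial (q • A) (1:k) ∈ I ^ q := by
      have h1 : monomial (∑ i, m i • As i) (1:k) ∈ I ^ q := by
        rw [← hsum, ← prod_monomial_pow]
        exact prod_pow_mem I Finset.univ _ m fun i _ => hAs i
      have h2 : monomial (q • A) (1:k)
          = monomial (q • A - ∑ i, m i • As i) (1:k) * monomial (∑ i, m i • As i) 1 := by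
        rw [monomial_mul, one_mul, tsub_add_cancel_of_le hSle]
      rw [h2]
      exact Ideal.mul_mem_left _ _ h1
    refine ⟨q, hq, fun i => if i = q then -(monomial (q • A) (1:k)) else 0, ?_, ?_⟩
    · intro i h1 h2
      by_cases h : i = q
      · subst h; simpa using neg_mem hmem
      · simp [h]
    · rw [Finset.sum_eq_single_of_mem q (Finset.mem_Icc.mpr ⟨hq, le_refl q⟩)
        (fun b _ hb => by simp [hb])]
      simp [monomial_pow]
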